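/- With K = ℝ₊ × ℝ₋ × ℝ₊ × ℝ₋, E = {(α,β) : α + |β|^{q'}/q' ≤ 0} and C = {(α,β) : α + |P_K β|^{q'}/q' ≤ 0}, one has C = E + {0} × K⁻, where K⁻ is the polar cone of K. -/

import Mathlib

open scoped BigOperators Pointwise
open Classical

noncomputable section

/-- Euclidean norm on ℝ⁴. -/
def nrm4 (w : Fin 4 → ℝ) : ℝ := Real.sqrt (∑ i, (w i) ^ 2)

/-- The cone `K = ℝ₊ × ℝ₋ × ℝ₊ × ℝ₋`. -/
def Kset : Set (Fin 4 → ℝ) := {w | 0 ≤ w 0 ∧ w 1 ≤ 0 ∧ 0 ≤ w 2 ∧ w 3 ≤ 0}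

/-- Euclidean projection onto `K`, computed componentwise. -/
def PK (w : Fin 4 → ℝ) : Fin 4 → ℝ := ![max (w 0) 0, min (w 1) 0, max (w 2) 0, min (w 3) 0]

/-- The polar cone `K⁻ = {y : y·c ≤ 0 for all c ∈ K}`. -/
def Kpolar : Set (Fin 4 → ℝ) := {y | ∀ c ∈ Kset, ∑ i, y i * c i ≤ 0}

lemma mem_Kpolar_iff (y : Fin 4 → ℝ) :
    y ∈ Kpolar ↔ y 0 ≤ 0 ∧ 0 ≤ y 1 ∧ y 2 ≤ 0 ∧ 0 ≤ y 3 := by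
  constructor
  · intro h
    refine ⟨?_, ?_, ?_, ?_⟩
    · have := h ![1, 0, 0, 0] (by constructor <;> norm_num [Kset, Matrix.cons_val_two, Matrix.cons_val_three])
      simpa [Fin.sum_univ_four] using this
    · have := h ![0, -1, 0, 0] (by constructor <;> norm_num [Kset, Matrix.cons_val_two, Matrix.cons_val_three])
      simp [Fin.sum_univ_four] at this; linarith
    · have := h ![0, 0, 1, 0] (by constructor <;> norm_num [Kset, Matrix.cons_val_two, Matrix.cons_val_three])
      simpa [Fin.sum_univ_four] using this
    · have := h ![0, 0, 0, -1] (by constructor <;> norm_num [Kset, Matrix.cons_val_two, Matrix.cons_val_three])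
      simp [Fin.sum_univ_four] at this; linarith
  · rintro ⟨h0, h1, h2, h3⟩ c ⟨c0, c1, c2, c3⟩
    rw [Fin.sum_univ_four]
    have t0 : y 0 * c 0 ≤ 0 := mul_nonpos_of_nonpos_of_nonneg h0 c0
    have t1 : y 1 * c 1 ≤ 0 := mul_nonpos_of_nonneg_of_nonpos h1 c1
    have t2 : y 2 * c 2 ≤ 0 := mul_nonpos_of_nonpos_of_nonneg h2 c2
    have t3 : y 3 * c 3 ≤ 0 := mul_nonpos_of_nonneg_of_nonpos h3 c3
    linarith

lemma sq_max_le (a b : ℝ) (hb : b ≤ 0) : (max (a + b) 0) ^ 2 ≤ a ^ 2 := by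
  rcases le_or_gt (a + b) 0 with h | h
  · rw [max_eq_right h]; simpa using sq_nonneg a
  · rw [max_eq_left h.le]; nlinarith

lemma sq_min_le (a b : ℝ) (hb : 0 ≤ b) : (min (a + b) 0) ^ 2 ≤ a ^ 2 := by
  rcases le_or_gt 0 (a + b) with h | h
  · rw [min_eq_right h]; simpa using sq_nonneg a
  · rw [min_eq_left h.le]; nlinarith

/-- `C = E + {0} × K⁻` (Minkowski sum). -/
theorem stmt2 (q' : ℝ) (hq' : 1 < q') :
    {p : ℝ × (Fin 4 → ℝ) | p.1 + nrm4 (PK p.2) ^ q' / q' ≤ 0}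
      = {p : ℝ × (Fin 4 → ℝ) | p.1 + nrm4 p.2 ^ q' / q' ≤ 0}
        + ({0} : Set ℝ) ×ˢ Kpolar := by
  ext ⟨α, w⟩
  simp only [Set.mem_setOf_eq, Set.mem_add, Set.mem_prod, Set.mem_singleton_iff, Prod.exists]
  constructor
  · intro h
    refine ⟨α, PK w, h, 0, w - PK w, ⟨rfl, ?_⟩, ?_⟩
    · rw [mem_Kpolar_iff]
      refine ⟨?_, ?_, ?_, ?_⟩ <;> simp [PK, le_max_left, min_le_left]
    · ext i
      · simp
      · simp only [Prod.snd_add, Pi.add_apply, Pi.sub_apply]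
        ring
  · rintro ⟨a, v, hE, z, y, ⟨hz, hy⟩, heq⟩
    subst hz
    have hα : α = a := by
      have := congrArg Prod.fst heq
      simpa using this.symm
    have hw : w = v + y := by
      have := congrArg Prod.snd heq
      simpa using this.symm
    subst hα; subst hw
    rw [mem_Kpolar_iff] at hy
    obtain ⟨h0, h1, h2, h3⟩ := hy
    have hle : nrm4 (PK (v + y)) ≤ nrm4 v := by
      unfold nrm4
      apply Real.sqrt_le_sqrt
      rw [Fin.sum_univ_four, Fin.sum_univ_four]
      have e0 : (PK (v + y)) 0 = max (v 0 + y 0) 0 := by simp [PK]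
      have e1 : (PK (v + y)) 1 = min (v 1 + y 1) 0 := by simp [PK]
      have e2 : (PK (v + y)) 2 = max (v 2 + y 2) 0 := by simp [PK]
      have e3 : (PK (v + y)) 3 = min (v 3 + y 3) 0 := by simp [PK]
      rw [e0, e1, e2, e3]
      have := sq_max_le (v 0) (y 0) h0
      have := sq_min_le (v 1) (y 1) h1
      have := sq_max_le (v 2) (y 2) h2
      have := sq_min_le (v 3) (y 3) h3
      linarith
    have hnn : (0:ℝ) ≤ nrm4 (PK (v + y)) := Real.sqrt_nonneg _
    have hpow : nrm4 (PK (v + y)) ^ q' ≤ nrm4 v ^ q' :=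
      Real.rpow_le_rpow hnn hle (by linarith)
    have hq0 : (0:ℝ) < q' := by linarith
    have : nrm4 (PK (v + y)) ^ q' / q' ≤ nrm4 v ^ q' / q' := by gcongr
    linarith
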